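/- (Equivalence theorem, nonlinear case.) Let V and W be real normed spaces, T : V → W a bounded linear operator, and (T_n) a sequence of (not necessarily linear or continuous) maps from V to W that is consistent with T. Then (T_n) converges to T if and only if (T_n) is stable at every point of V. -/

import Mathlib

/-- Equivalence theorem, nonlinear case: a sequence of (not necessarily linear or
continuous) maps Tₙ : V → W consistent with a bounded linear operator T converges to T
if and only if it is stable at every point of V. -/
theorem equivalence_theorem_nonlinear
    {V W : Type*} [NormedAddCommGroup V] [NormedSpace ℝ V]
    [NormedAddCommGroup W] [NormedSpace ℝ W]
    (T : V →L[ℝ] W) (Tn : ℕ → V → W)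
    (V₀ : Submodule ℝ V) (hdense : Dense (V₀ : Set V))
    (hcons : ∀ v ∈ V₀, ∀ ε > (0 : ℝ), ∃ n₀ : ℕ, ∀ n ≥ n₀, ‖Tn n v - T v‖ ≤ ε) :
    (∀ v : V, ∀ ε > (0 : ℝ), ∃ n₀ : ℕ, ∀ n ≥ n₀, ‖Tn n v - T v‖ ≤ ε) ↔
      (∀ v₀ : V, ∀ ε > (0 : ℝ), ∃ δ > (0 : ℝ), ∀ v : V, ‖v - v₀‖ ≤ δ →
        ∃ n₀ : ℕ, ∀ n ≥ n₀, ‖Tn n v - Tn n v₀‖ ≤ ε) := by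
  have hTpos : (0 : ℝ) < ‖T‖ + 1 := by positivity
  constructor
  · intro hconv v₀ ε hε
    refine ⟨ε / (3 * (‖T‖ + 1)), by positivity, fun v hv => ?_⟩
    obtain ⟨n₁, hn₁⟩ := hconv v (ε / 3) (by positivity)
    obtain ⟨n₂, hn₂⟩ := hconv v₀ (ε / 3) (by positivity)
    refine ⟨max n₁ n₂, fun n hn => ?_⟩
    have h1 := hn₁ n (le_trans (le_max_left _ _) hn)
    have h2 := hn₂ n (le_trans (le_max_right _ _) hn)
    have hT : ‖T v - T v₀‖ ≤ ε / 3 := by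
      calc ‖T v - T v₀‖ = ‖T (v - v₀)‖ := by rw [map_sub]
        _ ≤ ‖T‖ * ‖v - v₀‖ := T.le_opNorm _
        _ ≤ (‖T‖ + 1) * (ε / (3 * (‖T‖ + 1))) := by
            apply mul_le_mul (by linarith) hv (norm_nonneg _) (by positivity)
        _ = ε / 3 := by field_simp
    calc ‖Tn n v - Tn n v₀‖
        ≤ ‖Tn n v - T v‖ + ‖T v - T v₀‖ + ‖T v₀ - Tn n v₀‖ := by
          have := norm_sub_le_norm_sub_add_norm_sub (Tn n v) (T v) (Tn n v₀)
          have := norm_sub_le_norm_sub_add_norm_sub (T v) (T v₀) (Tn n v₀)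
          linarith
      _ ≤ ε / 3 + ε / 3 + ε / 3 := by
          rw [norm_sub_rev (T v₀)]; gcongr
      _ = ε := by ring
  · intro hstab v ε hε
    obtain ⟨δ, hδ, hδv⟩ := hstab v (ε / 3) (by positivity)
    set r := min δ (ε / (3 * (‖T‖ + 1))) with hr
    have hrpos : 0 < r := lt_min hδ (by positivity)
    obtain ⟨v', hv'ball, hv'mem⟩ := Metric.dense_iff.mp hdense v r hrpos
    have hdist : ‖v' - v‖ ≤ r := le_of_lt (by simpa [dist_eq_norm] using hv'ball)
    obtain ⟨n₁, hn₁⟩ := hδv v' (hdist.trans (min_le_left _ _))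
    obtain ⟨n₂, hn₂⟩ := hcons v' hv'mem (ε / 3) (by positivity)
    refine ⟨max n₁ n₂, fun n hn => ?_⟩
    have h1 := hn₁ n (le_trans (le_max_left _ _) hn)
    have h2 := hn₂ n (le_trans (le_max_right _ _) hn)
    have hT : ‖T v' - T v‖ ≤ ε / 3 := by
      calc ‖T v' - T v‖ = ‖T (v' - v)‖ := by rw [map_sub]
        _ ≤ ‖T‖ * ‖v' - v‖ := T.le_opNorm _
        _ ≤ (‖T‖ + 1) * (ε / (3 * (‖T‖ + 1))) := by
            apply mul_le_mul (by linarith) (hdist.trans (min_le_right _ _))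
              (norm_nonneg _) (by positivity)
        _ = ε / 3 := by field_simp
    calc ‖Tn n v - T v‖
        ≤ ‖Tn n v - Tn n v'‖ + ‖Tn n v' - T v'‖ + ‖T v' - T v‖ := by
          have := norm_sub_le_norm_sub_add_norm_sub (Tn n v) (Tn n v') (T v)
          have := norm_sub_le_norm_sub_add_norm_sub (Tn n v') (T v') (T v)
          linarith
      _ ≤ ε / 3 + ε / 3 + ε / 3 := by
          rw [norm_sub_rev (Tn n v)]; gcongr
      _ = ε := by ring
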